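/- (Petr) Let f ∈ F_q[x] be a polynomial of degree d ≥ 1 with distinct monic irreducible factors f_1, …, f_k of degrees d_1, …, d_k, and let R = F_q[x]/(f). Let F be the F_q-linear endomorphism of R induced by h ↦ h^q. Then in F_q[T] one has det(1_R - T·F) = ∏_{i=1}^{k} (1 - T^{d_i}), where det(1_R - T·F) denotes the determinant over F_q[T] of the matrix I - T·M for M the matrix of F in any F_q-basis of R (equivalently, the reverse characteristic polynomial of F). -/

import Mathlib

open Polynomial Module LinearMap

section Helpers

/-- In a finite monoid, some positive power of every element is idempotent. -/
lemma exists_pow_idem {M : Type*} [Monoid M] [Finite M] (x : M) :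
    ∃ r, 0 < r ∧ x ^ r * x ^ r = x ^ r := by
  obtain ⟨m, n, hmn, he⟩ := Finite.exists_ne_map_eq_of_infinite (fun i : ℕ => x ^ i)
  wlog hlt : m < n generalizing m n
  · exact this n m hmn.symm he.symm (by omega)
  have key : ∀ a, m ≤ a → x ^ (a + (n - m)) = x ^ a := by
    intro a ha
    have h1 : a + (n - m) = (a - m) + n := by omega
    have h2 : a = (a - m) + m := by omega
    rw [h1, pow_add, ← he, ← pow_add, ← h2]
  have key2 : ∀ t a, m ≤ a → x ^ (a + t * (n - m)) = x ^ a := by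
    intro t
    induction t with
    | zero => simp
    | succ t ih =>
      intro a ha
      have h1 : a + (t + 1) * (n - m) = (a + (n - m)) + t * (n - m) := by ring
      rw [h1, ih _ (by omega), key a ha]
  have hr0 : 0 < (m + 1) * (n - m) := Nat.mul_pos (by omega) (by omega)
  have hrm : m ≤ (m + 1) * (n - m) := by
    have := Nat.le_mul_of_pos_right (m + 1) (show 0 < n - m by omega)
    omega
  refine ⟨(m + 1) * (n - m), hr0, ?_⟩
  rw [← pow_add]
  exact key2 (m + 1) _ hrm

/-- Characteristic polynomial of an endomorphism preserving two complementary
subspaces is the product of the characteristic polynomials of the restrictions. -/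
lemma charpoly_isCompl {K V : Type*} [Field K] [AddCommGroup V] [Module K V]
    [FiniteDimensional K V] (φ : V →ₗ[K] V) (p q : Submodule K V) (h : IsCompl p q)
    (hp : ∀ x ∈ p, φ x ∈ p) (hq : ∀ x ∈ q, φ x ∈ q) :
    φ.charpoly = (φ.restrict hp).charpoly * (φ.restrict hq).charpoly := by
  let ψ := (φ.restrict hp).prodMap (φ.restrict hq)
  let e := Submodule.prodEquivOfIsCompl p q h
  let bV := Module.Free.chooseBasis K p
  let bW := Module.Free.chooseBasis K q
  have hψ : ψ = e.symm.conj φ := by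
    apply (bV.prod bW).ext
    simp only [Basis.prod_apply, coe_inl, coe_inr, prodMap_apply, LinearEquiv.conj_apply,
      LinearEquiv.symm_symm, Submodule.coe_prodEquivOfIsCompl, coe_comp, LinearEquiv.coe_coe,
      Function.comp_apply, coprod_apply, Submodule.coe_subtype, map_add, Sum.forall, Sum.elim_inl,
      map_zero, ZeroMemClass.coe_zero, add_zero, LinearEquiv.eq_symm_apply, and_self,
      Submodule.coe_prodEquivOfIsCompl', restrict_coe_apply, implies_true, Sum.elim_inr, zero_add,
      e, ψ, bV, bW]
  rw [← e.symm.charpoly_conj φ, ← hψ, LinearMap.charpoly_prodMap]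

lemma charpoly_subsingleton {K V : Type*} [Field K] [AddCommGroup V] [Module K V]
    [Subsingleton V] (φ : V →ₗ[K] V) : φ.charpoly = 1 := by
  have b : Basis (Fin 0) K V := Basis.empty V
  haveI : Module.Finite K V := Module.Finite.of_basis b
  rw [← LinearMap.charpoly_toMatrix φ b, Matrix.charpoly, Matrix.det_isEmpty]

/-- The `q`-power map as an `Fq`-linear endomorphism of an `Fq`-algebra. -/
noncomputable def qpowL (Fq : Type) [Field Fq] [Fintype Fq] (A : Type*) [CommRing A] [Algebra Fq A] [Nontrivial A] :
    A →ₗ[Fq] A where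
  toFun x := x ^ Fintype.card Fq
  map_add' x y := by
    have hinj : Function.Injective (algebraMap Fq A) := (algebraMap Fq A).injective
    set p := ringChar Fq with hp
    haveI : CharP Fq p := ringChar.charP Fq
    have hpp : p.Prime := CharP.char_is_prime Fq p
    haveI : CharP A p := charP_of_injective_algebraMap hinj p
    haveI : Fact p.Prime := ⟨hpp⟩
    haveI : ExpChar A p := ExpChar.prime hpp
    obtain ⟨n, _, hcard⟩ := FiniteField.card Fq p
    show (x + y) ^ Fintype.card Fq = x ^ Fintype.card Fq + y ^ Fintype.card Fq
    rw [hcard]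
    exact add_pow_char_pow x y p (n : ℕ)
  map_smul' c x := by
    simp only [Algebra.smul_def, mul_pow, RingHom.id_apply]
    rw [← map_pow, FiniteField.pow_card]

variable {Fq : Type} [Field Fq] [Fintype Fq]

@[simp] lemma qpowL_apply {A : Type*} [CommRing A] [Algebra Fq A] [Nontrivial A] (x : A) :
    qpowL Fq A x = x ^ Fintype.card Fq := rfl

/-- Powers of a linear map sending `y` to `y ^ q` send `y` to `y ^ q ^ j`. -/
lemma pow_apply_of_frob {A : Type*} [CommRing A] [Algebra Fq A]
    (φ : A →ₗ[Fq] A) (hφ : ∀ y, φ y = y ^ Fintype.card Fq) (j : ℕ) (y : A) :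
    (φ ^ j) y = y ^ Fintype.card Fq ^ j := by
  induction j generalizing y with
  | zero => simp
  | succ j ih =>
    rw [pow_succ, Module.End.mul_apply, hφ, ih, ← pow_mul, ← pow_succ']

/-- The characteristic polynomial of the `q`-power Frobenius on a finite extension
field of `Fq` is `X ^ n - 1` where `n` is the degree. -/
lemma charpoly_qpow_field (L : Type*) [Field L] [Algebra Fq L] [FiniteDimensional Fq L]
    (φ : L →ₗ[Fq] L) (hφ : ∀ x, φ x = x ^ Fintype.card Fq) :
    φ.charpoly = X ^ (finrank Fq L) - 1 := by
  classical
  set q := Fintype.card Fq with hq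
  set n := finrank Fq L with hn
  have hq1 : 1 < q := Fintype.one_lt_card
  haveI : Finite L := Module.finite_of_finite Fq
  haveI : Fintype L := Fintype.ofFinite L
  have hcard : Fintype.card L = q ^ n := card_eq_pow_finrank
  have hn0 : 0 < n := finrank_pos
  have hpow := pow_apply_of_frob φ hφ
  -- linear independence of the powers of Frobenius
  have hli : LinearIndependent Fq fun j : Fin n => (φ ^ (j : ℕ)) := by
    rw [Fintype.linearIndependent_iff]
    intro c hc j0
    by_contra hcj
    set P : L[X] := ∑ j : Fin n, C (algebraMap Fq L (c j)) * X ^ (q ^ (j : ℕ)) with hP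
    have hProot : ∀ x : L, P.eval x = 0 := by
      intro x
      have h1 := congrArg (fun ψ : L →ₗ[Fq] L => ψ x) hc
      simp only [LinearMap.coe_sum, Finset.sum_apply, LinearMap.smul_apply,
        LinearMap.zero_apply] at h1
      rw [hP, eval_finset_sum]
      rw [← h1]
      refine Finset.sum_congr rfl fun j _ => ?_
      rw [hpow, eval_mul, eval_C, eval_pow, eval_X, Algebra.smul_def]
    have hcoeff : P.coeff (q ^ (j0 : ℕ)) = algebraMap Fq L (c j0) := by
      rw [hP, finset_sum_coeff]
      rw [Finset.sum_eq_single j0]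
      · simp [coeff_X_pow]
      · intro j _ hj
        have hne : ¬ (q ^ (j0 : ℕ) = q ^ (j : ℕ)) := by
          intro h
          exact hj (Fin.ext (Nat.pow_right_injective hq1 h)).symm
        simp [coeff_C_mul, coeff_X_pow, hne]
      · simp
    have hPne : P ≠ 0 := by
      intro h0
      apply hcj
      have := hcoeff
      rw [h0, coeff_zero] at this
      exact (algebraMap Fq L).injective (by simpa using this.symm)
    have hdeg : P.natDegree < Fintype.card L := by
      have h1 : P.natDegree ≤ q ^ (n - 1) := by
        apply Polynomial.natDegree_sum_le_of_forall_le
        intro j _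
        refine le_trans (natDegree_C_mul_le _ _) ?_
        rw [natDegree_X_pow]
        exact Nat.pow_le_pow_right (by omega) (by omega)
      rw [hcard]
      exact lt_of_le_of_lt h1 (Nat.pow_lt_pow_right hq1 (by omega))
    exact hPne (Polynomial.eq_zero_of_natDegree_lt_card_of_eval_eq_zero P
      Function.injective_id hProot (by simpa using hdeg))
  -- charpoly minus (X^n - 1) annihilates φ and has small degree, hence is zero
  have hmon := LinearMap.charpoly_monic φ
  have hcdeg : φ.charpoly.natDegree = n := LinearMap.charpoly_natDegree φ
  have hφn : φ ^ n = 1 := by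
    ext x
    rw [hpow, Module.End.one_apply, ← hcard, FiniteField.pow_card]
  set Dp : Fq[X] := φ.charpoly - (X ^ n - 1) with hDp
  have hDaev : Polynomial.aeval φ Dp = 0 := by
    rw [hDp, map_sub, LinearMap.aeval_self_charpoly, map_sub, map_pow, aeval_X, map_one, hφn,
      sub_self, sub_zero]
  rcases eq_or_ne Dp 0 with hD0 | hD0
  · rw [← sub_eq_zero]; exact hD0
  exfalso
  have hDdeg : Dp.natDegree < n := by
    have hle : Dp.natDegree ≤ n := by
      refine le_trans (natDegree_sub_le _ _) (max_le (le_of_eq hcdeg) ?_)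
      refine le_trans (natDegree_sub_le _ _) (max_le ?_ ?_)
      · simp
      · simp
    rcases lt_or_eq_of_le hle with h | h
    · exact h
    · exfalso
      have hcoeffn : Dp.coeff n = 0 := by
        rw [hDp, coeff_sub, coeff_sub, coeff_X_pow, if_pos rfl]
        have hch : φ.charpoly.coeff n = 1 := by
          rw [← hcdeg]; exact hmon.coeff_natDegree
        rw [hch, coeff_one, if_neg (by omega)]
        ring
      exact hD0 (leadingCoeff_eq_zero.mp (by rw [leadingCoeff, h]; exact hcoeffn))
  have hsum : ∑ j : Fin n, Dp.coeff (j : ℕ) • (φ ^ (j : ℕ)) = 0 := by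
    have := Polynomial.aeval_eq_sum_range' hDdeg φ
    rw [hDaev] at this
    rw [← Fin.sum_univ_eq_sum_range (fun i => Dp.coeff i • φ ^ i) n] at this
    exact this.symm
  have hco := Fintype.linearIndependent_iff.mp hli (fun j => Dp.coeff (j : ℕ)) hsum
  apply hD0
  ext m
  rcases lt_or_ge m n with h | h
  · simpa using hco ⟨m, h⟩
  · simp [Polynomial.coeff_eq_zero_of_natDegree_lt (lt_of_lt_of_le hDdeg h)]

/-- Characteristic polynomial of a componentwise endomorphism of a finite product. -/
lemma charpoly_pi {K : Type} [Field K] : ∀ (k : ℕ) (M : Fin k → Type)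
    (_ : ∀ i, AddCommGroup (M i)) (_ : ∀ i, Module K (M i))
    (_ : ∀ i, FiniteDimensional K (M i)) (φ : ∀ i, M i →ₗ[K] M i),
    (LinearMap.pi fun i => φ i ∘ₗ LinearMap.proj i).charpoly = ∏ i, (φ i).charpoly := by
  intro k
  induction k with
  | zero =>
    intro M _ _ _ φ
    haveI : Subsingleton (∀ i, M i) := ⟨fun a b => funext fun i => i.elim0⟩
    rw [charpoly_subsingleton]
    simp
  | succ k ih =>
    intro M _ _ _ φ
    let e : (∀ i, M i) ≃ₗ[K] (M 0 × ∀ j : Fin k, M j.succ) :=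
      { toFun := fun x => (x 0, fun j => x j.succ)
        invFun := fun y => Fin.cons y.1 y.2
        map_add' := fun x y => rfl
        map_smul' := fun c x => rfl
        left_inv := fun x => by
          funext i
          refine Fin.cases ?_ ?_ i
          · simp
          · intro j; simp
        right_inv := fun y => by
          refine Prod.ext ?_ ?_
          · simp
          · funext j; simp }
    have hconj : e.conj (LinearMap.pi fun i => φ i ∘ₗ LinearMap.proj i)
        = (φ 0).prodMap (LinearMap.pi fun j : Fin k => φ j.succ ∘ₗ LinearMap.proj j) := by
      apply LinearMap.ext
      intro y
      rw [LinearEquiv.conj_apply]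
      have hsymm : e.symm y = Fin.cons y.1 y.2 := rfl
      refine Prod.ext ?_ ?_
      · simp only [coe_comp, LinearEquiv.coe_coe, Function.comp_apply, hsymm,
          prodMap_apply]
        show φ 0 ((Fin.cons y.1 y.2 : ∀ i, M i) 0) = _
        simp
      · simp only [coe_comp, LinearEquiv.coe_coe, Function.comp_apply, hsymm,
          prodMap_apply]
        funext j
        show φ j.succ ((Fin.cons y.1 y.2 : ∀ i, M i) j.succ) = _
        simp [LinearMap.pi_apply]
    have h1 : (LinearMap.pi fun i => φ i ∘ₗ LinearMap.proj i).charpoly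
        = (e.conj (LinearMap.pi fun i => φ i ∘ₗ LinearMap.proj i)).charpoly :=
      (e.charpoly_conj _).symm
    rw [h1, hconj, LinearMap.charpoly_prodMap,
      ih (fun j => M j.succ) _ _ _ (fun j => φ j.succ), Fin.prod_univ_succ]

/-- If every prime factor of `f` divides `g` then `f` divides `g ^ f.natDegree`. -/
lemma dvd_pow_of_prime_dvd {Fq : Type} [Field Fq] :
    ∀ (n : ℕ) (f g : Polynomial Fq), f ≠ 0 → f.natDegree ≤ n →
    (∀ p : Polynomial Fq, Prime p → p ∣ f → p ∣ g) → f ∣ g ^ n := by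
  intro n
  induction n with
  | zero =>
    intro f g hf hdeg _
    have h0 : f.natDegree = 0 := by omega
    have hC : f = C (f.coeff 0) := Polynomial.eq_C_of_natDegree_eq_zero h0
    have hc0 : f.coeff 0 ≠ 0 := by
      intro h
      apply hf
      rw [hC, h, map_zero]
    have : IsUnit f := by
      rw [hC]
      exact Polynomial.isUnit_C.mpr (isUnit_iff_ne_zero.mpr hc0)
    simpa using this.dvd
  | succ n ih =>
    intro f g hf hdeg h
    by_cases hu : IsUnit f
    · exact hu.dvd
    obtain ⟨p, hpm, hpi, hpd⟩ := Polynomial.exists_monic_irreducible_factor f hu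
    obtain ⟨f', rfl⟩ := hpd
    have hp0 : p ≠ 0 := hpm.ne_zero
    have hf' : f' ≠ 0 := fun h0 => hf (by rw [h0, mul_zero])
    have hpprime : Prime p := hpi.prime
    have hpg : p ∣ g := h p hpprime (dvd_mul_right p f')
    have hdeg' : f'.natDegree ≤ n := by
      have h1 : (p * f').natDegree = p.natDegree + f'.natDegree :=
        Polynomial.natDegree_mul hp0 hf'
      have h2 : 0 < p.natDegree := hpi.natDegree_pos
      omega
    have hf'dvd : f' ∣ g ^ n :=
      ih f' g hf' hdeg' (fun pp hpp hppd => h pp hpp (hppd.trans (dvd_mul_left f' p)))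
    rw [pow_succ']
    exact mul_dvd_mul hpg hf'dvd

lemma reverse_prod {Fq : Type} [Field Fq] {k : ℕ} (g : Fin k → Polynomial Fq)
    (s : Finset (Fin k)) : (∏ i ∈ s, g i).reverse = ∏ i ∈ s, (g i).reverse := by
  classical
  induction s using Finset.induction with
  | empty =>
    simp only [Finset.prod_empty]
    rw [← Polynomial.C_1, Polynomial.reverse_C]
  | insert a s hne ih =>
    rw [Finset.prod_insert hne, Polynomial.reverse_mul_of_domain, ih, Finset.prod_insert hne]

lemma reverse_X_pow_sub_one {Fq : Type} [Field Fq] {n : ℕ} (hn : 0 < n) :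
    (X ^ n - 1 : Polynomial Fq).reverse = 1 - X ^ n := by
  have hdeg : (X ^ n - 1 : Polynomial Fq).natDegree = n := by
    simpa using natDegree_X_pow_sub_C (n := n) (r := (1 : Fq))
  rw [Polynomial.reverse, hdeg, show (1 : Polynomial Fq) = C 1 by simp, reflect_sub,
    reflect_C, reflect_monomial, revAt_le (le_refl n), Nat.sub_self, pow_zero]
  simp

lemma reverse_X_pow' {Fq : Type} [Field Fq] (m : ℕ) :
    (X ^ m : Polynomial Fq).reverse = 1 := by
  have h1 := Polynomial.reverse_mul_X_pow (1 : Polynomial Fq) m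
  rw [one_mul] at h1
  rw [h1, ← Polynomial.C_1, Polynomial.reverse_C]

end Helpers

/-- (Petr) For `f ∈ F_q[x]` of degree `d ≥ 1` with distinct monic irreducible factors of
degrees `d_1, …, d_k`, and `F` the `q`-th power Frobenius acting on `R = F_q[x]/(f)`,
one has `det(1_R - T·F) = ∏_{i=1}^k (1 - T^{d_i})` in `F_q[T]`. -/
theorem petr_congruence_formula
    (Fq : Type) [Field Fq] [Fintype Fq]
    (f : Polynomial Fq) (d : ℕ) (hd : 1 ≤ d) (hdeg : f.natDegree = d)
    (k : ℕ) (fi : Fin k → Polynomial Fq) (di : Fin k → ℕ)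
    (hinj : Function.Injective fi)
    (hmonic : ∀ i, (fi i).Monic) (hirr : ∀ i, Irreducible (fi i))
    (hdi : ∀ i, (fi i).natDegree = di i)
    (hfact : ∀ g : Polynomial Fq, g.Monic → Irreducible g → (g ∣ f ↔ ∃ i, g = fi i))
    (F : AdjoinRoot f →ₗ[Fq] AdjoinRoot f)
    (hF : ∀ y, F y = y ^ Fintype.card Fq)
    (ι : Type) [Fintype ι] [DecidableEq ι] (b : Basis ι Fq (AdjoinRoot f)) :
    Matrix.det
        (1 - (Polynomial.X : Polynomial Fq) • (LinearMap.toMatrix b b F).map Polynomial.C) =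
      ∏ i : Fin k, (1 - (Polynomial.X : Polynomial Fq) ^ di i) := by
  classical
  set q := Fintype.card Fq with hq
  have hq1 : 1 < q := Fintype.one_lt_card
  have hf0 : f ≠ 0 := by
    intro h
    rw [h] at hdeg
    simp at hdeg
    omega
  haveI : Module.Finite Fq (AdjoinRoot f) := Module.Finite.of_basis b
  haveI : Module.Free Fq (AdjoinRoot f) := Module.Free.of_basis b
  -- rewrite LHS as the reverse of the characteristic polynomial of F
  have hLHS : Matrix.det
        (1 - (Polynomial.X : Polynomial Fq) • (LinearMap.toMatrix b b F).map Polynomial.C)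
      = (LinearMap.charpoly F).reverse := by
    have h1 := Matrix.reverse_charpoly (LinearMap.toMatrix b b F)
    rw [LinearMap.charpoly_toMatrix F b] at h1
    exact h1.symm
  rw [hLHS]
  -- Frobenius setup
  haveI : Finite (AdjoinRoot f) := Finite.of_equiv _ b.equivFun.toEquiv.symm
  haveI : Finite (AdjoinRoot f →ₗ[Fq] AdjoinRoot f) :=
    Finite.of_injective _ LinearMap.coe_injective
  obtain ⟨r, hr0, hridem⟩ := exists_pow_idem F
  set G := F ^ r with hGdef
  have hpowF : ∀ (j : ℕ) (y : AdjoinRoot f), (F ^ j) y = y ^ q ^ j :=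
    pow_apply_of_frob F hF
  have hGy : ∀ y, G y = y ^ q ^ r := fun y => hpowF r y
  have hGG : ∀ y, G (G y) = G y := by
    intro y
    have := congrArg (fun ψ : AdjoinRoot f →ₗ[Fq] AdjoinRoot f => ψ y) hridem
    simpa [Module.End.mul_apply] using this
  have hproj : LinearMap.IsProj (LinearMap.range G) G :=
    ⟨fun x => LinearMap.mem_range_self _ x, by
      rintro x ⟨y, rfl⟩
      exact hGG y⟩
  have hcompl : IsCompl (LinearMap.range G) (LinearMap.ker G) := hproj.isCompl
  have hFG : ∀ y, F (G y) = G (F y) := by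
    intro y
    have : F * G = G * F := by
      rw [hGdef, ← pow_succ', ← pow_succ]
    have := congrArg (fun ψ : AdjoinRoot f →ₗ[Fq] AdjoinRoot f => ψ y) this
    simpa [Module.End.mul_apply] using this
  have hinvW : ∀ x ∈ LinearMap.range G, F x ∈ LinearMap.range G := by
    rintro x ⟨y, rfl⟩
    exact ⟨F y, (hFG y).symm⟩
  have hinvK : ∀ x ∈ LinearMap.ker G, F x ∈ LinearMap.ker G := by
    intro x hx
    rw [LinearMap.mem_ker] at hx ⊢
    rw [← hFG, hx, map_zero]
  rw [charpoly_isCompl F _ _ hcompl hinvW hinvK]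
  -- the kernel part is nilpotent
  have hnil : IsNilpotent (F.restrict hinvK) := by
    refine ⟨r, ?_⟩
    ext x
    rw [Module.End.pow_restrict, LinearMap.restrict_apply]
    have hx : G (x : AdjoinRoot f) = 0 := x.2
    simpa using hx
  rw [hnil.charpoly_eq_X_pow_finrank]
  -- the CRT ring hom
  haveI hfactI : ∀ i, Fact (Irreducible (fi i)) := fun i => ⟨hirr i⟩
  haveI hfinKi : ∀ i, Module.Finite Fq (AdjoinRoot (fi i)) := fun i =>
    Module.Finite.of_basis (AdjoinRoot.powerBasis' (hmonic i)).basis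
  haveI hfinKi' : ∀ i, Finite (AdjoinRoot (fi i)) := fun i =>
    Finite.of_equiv _ (AdjoinRoot.powerBasis' (hmonic i)).basis.equivFun.toEquiv.symm
  have hdvd_f : ∀ i, fi i ∣ f := fun i => (hfact (fi i) (hmonic i) (hirr i)).mpr ⟨i, rfl⟩
  have hnotdvd : ∀ i j, i ≠ j → ¬ fi i ∣ fi j := by
    intro i j hij hdvd
    have hassoc : Associated (fi i) (fi j) :=
      (hirr i).associated_of_dvd (hirr j) hdvd
    exact hij (hinj (Polynomial.eq_of_monic_of_associated (hmonic i) (hmonic j) hassoc))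
  let χ : Polynomial Fq →+* (∀ i, AdjoinRoot (fi i)) :=
    Pi.ringHom fun i => AdjoinRoot.mk (fi i)
  have hχsurj : Function.Surjective χ := by
    have hco : Pairwise fun i j => IsCoprime (Ideal.span {fi i}) (Ideal.span {fi j}) := by
      intro i j hij
      rw [Ideal.isCoprime_span_singleton_iff]
      exact (hirr i).coprime_iff_not_dvd.mpr (hnotdvd i j hij)
    have hsurj := Ideal.quotientInfToPiQuotient_surj hco
    intro t
    obtain ⟨y, hy⟩ := hsurj t
    obtain ⟨g, rfl⟩ := Ideal.Quotient.mk_surjective y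
    refine ⟨g, ?_⟩
    funext i
    have h5 := Ideal.quotientInfToPiQuotient_mk' (fun i => Ideal.span {fi i}) g i
    show Ideal.Quotient.mk (Ideal.span {fi i}) g = t i
    rw [← h5]
    exact congrFun hy i
  have hker : ∀ a ∈ Ideal.span {f}, χ a = 0 := by
    intro a ha
    rw [Ideal.mem_span_singleton] at ha
    funext i
    show AdjoinRoot.mk (fi i) a = 0
    rw [AdjoinRoot.mk_eq_zero]
    exact (hdvd_f i).trans ha
  let Φ : AdjoinRoot f →+* (∀ i, AdjoinRoot (fi i)) :=
    Ideal.Quotient.lift (Ideal.span {f}) χ hker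
  have hΦmk : ∀ g, Φ (AdjoinRoot.mk f g) = χ g := fun g => rfl
  have hΦsurj : Function.Surjective Φ := by
    intro t
    obtain ⟨g, hg⟩ := hχsurj t
    exact ⟨AdjoinRoot.mk f g, by rw [hΦmk, hg]⟩
  -- Φ is Fq-linear
  have hΦsmul : ∀ (c : Fq) (x : AdjoinRoot f), Φ (c • x) = c • Φ x := by
    intro c x
    obtain ⟨g, rfl⟩ := AdjoinRoot.mk_surjective x
    have h1 : c • AdjoinRoot.mk f g = AdjoinRoot.mk f (C c * g) := by
      rw [Algebra.smul_def, map_mul]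
      congr 1
    rw [h1, hΦmk]
    funext i
    show AdjoinRoot.mk (fi i) (C c * g) = (c • Φ (AdjoinRoot.mk f g)) i
    rw [map_mul]
    have h2 : (c • Φ (AdjoinRoot.mk f g)) i = c • (Φ (AdjoinRoot.mk f g) i) := rfl
    rw [h2, Algebra.smul_def]
    congr 1
  let Φl : AdjoinRoot f →ₗ[Fq] (∀ i, AdjoinRoot (fi i)) :=
    { toFun := Φ, map_add' := map_add Φ, map_smul' := hΦsmul }
  let e0 : LinearMap.range G →ₗ[Fq] (∀ i, AdjoinRoot (fi i)) :=
    Φl ∘ₗ (Submodule.subtype _)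
  -- injectivity
  have hinj0 : ∀ x : AdjoinRoot f, x ∈ LinearMap.range G → Φ x = 0 → x = 0 := by
    intro x hx hΦx
    obtain ⟨g, rfl⟩ := AdjoinRoot.mk_surjective x
    have hdvd : ∀ i, fi i ∣ g := by
      intro i
      rw [← AdjoinRoot.mk_eq_zero]
      exact congrFun hΦx i
    have hprime : ∀ p : Polynomial Fq, Prime p → p ∣ f → p ∣ g := by
      intro p hp hpf
      have hpn : p ≠ 0 := hp.ne_zero
      have hmn : (normalize p).Monic := Polynomial.monic_normalize hpn
      have hin : Irreducible (normalize p) :=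
        (associated_normalize p).irreducible hp.irreducible
      have hnd : normalize p ∣ f := by rwa [normalize_dvd_iff]
      obtain ⟨i, hi⟩ := (hfact _ hmn hin).mp hnd
      calc p ∣ normalize p := dvd_normalize_iff.mpr dvd_rfl
        _ = fi i := hi
        _ ∣ g := hdvd i
    have hfg : f ∣ g ^ d := by
      have := dvd_pow_of_prime_dvd f.natDegree f g hf0 le_rfl hprime
      rwa [hdeg] at this
    have hxd : (AdjoinRoot.mk f g) ^ d = 0 := by
      rw [← map_pow, AdjoinRoot.mk_eq_zero]
      exact hfg
    have hfix : G (AdjoinRoot.mk f g) = AdjoinRoot.mk f g := hproj.map_id _ hx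
    have hfixt : ∀ t : ℕ, (AdjoinRoot.mk f g) ^ q ^ (r * t) = AdjoinRoot.mk f g := by
      intro t
      induction t with
      | zero => simp
      | succ t ih =>
        have h1 : q ^ (r * (t + 1)) = q ^ (r * t) * q ^ r := by
          rw [← pow_add]; ring_nf
        rw [h1, pow_mul, ih, ← hGy, hfix]
    have hbig : d ≤ q ^ (r * d) := by
      calc d ≤ 2 ^ d := Nat.le_of_lt (Nat.lt_two_pow_self (n := d))
        _ ≤ q ^ d := Nat.pow_le_pow_left hq1 d
        _ ≤ q ^ (r * d) := Nat.pow_le_pow_right (by omega) (by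
            have : 1 * d ≤ r * d := Nat.mul_le_mul_right d hr0
            omega)
    calc AdjoinRoot.mk f g = (AdjoinRoot.mk f g) ^ q ^ (r * d) := (hfixt d).symm
      _ = (AdjoinRoot.mk f g) ^ d * (AdjoinRoot.mk f g) ^ (q ^ (r * d) - d) := by
          rw [← pow_add]
          congr 1
          omega
      _ = 0 := by rw [hxd, zero_mul]
  have he0inj : Function.Injective e0 := by
    intro x y hxy
    have h1 : Φ (x : AdjoinRoot f) = Φ (y : AdjoinRoot f) := hxy
    have h2 : ((x : AdjoinRoot f) - y) ∈ LinearMap.range G :=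
      Submodule.sub_mem _ x.2 y.2
    have h3 : Φ ((x : AdjoinRoot f) - y) = 0 := by
      rw [map_sub, h1, sub_self]
    have := hinj0 _ h2 h3
    exact Subtype.ext (sub_eq_zero.mp this)
  -- surjectivity
  have he0surj : Function.Surjective e0 := by
    intro t
    have hfrob : ∀ i, ∃ s : AdjoinRoot (fi i), s ^ q ^ r = t i := by
      intro i
      set p := ringChar Fq with hp
      haveI : CharP Fq p := ringChar.charP Fq
      have hpp : p.Prime := CharP.char_is_prime Fq p
      haveI : Fact p.Prime := ⟨hpp⟩
      haveI : CharP (AdjoinRoot (fi i)) p :=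
        charP_of_injective_algebraMap (algebraMap Fq (AdjoinRoot (fi i))).injective p
      obtain ⟨n, _, hcard⟩ := FiniteField.card Fq p
      have hinjpow : Function.Injective
          (fun y : AdjoinRoot (fi i) => y ^ q ^ r) := by
        have : ∀ y : AdjoinRoot (fi i), y ^ q ^ r =
            _root_.iterateFrobenius (AdjoinRoot (fi i)) p ((n : ℕ) * r) y := by
          intro y
          rw [_root_.iterateFrobenius_def, hq, hcard, ← pow_mul]
        intro a b' hab
        simp only [this] at hab
        exact (_root_.iterateFrobenius (AdjoinRoot (fi i)) p ((n : ℕ) * r)).injective hab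
      have hsurjpow := Finite.injective_iff_surjective.mp hinjpow
      exact hsurjpow (t i)
    choose s hs using hfrob
    obtain ⟨z, hz⟩ := hΦsurj s
    refine ⟨⟨G z, LinearMap.mem_range_self _ z⟩, ?_⟩
    show Φ (G z) = t
    rw [hGy, map_pow, hz]
    funext i
    show (s ^ q ^ r) i = t i
    rw [Pi.pow_apply, hs]
  let e : LinearMap.range G ≃ₗ[Fq] (∀ i, AdjoinRoot (fi i)) :=
    LinearEquiv.ofBijective e0 ⟨he0inj, he0surj⟩
  -- Frobenius on the product as componentwise qpowL
  have hrest : (F.restrict hinvW).charpoly = ∏ i, ((X : Polynomial Fq) ^ di i - 1) := by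
    have hnontriv : ∀ i, Nontrivial (AdjoinRoot (fi i)) := fun i => inferInstance
    have hconj : e.conj (F.restrict hinvW)
        = LinearMap.pi (fun i => qpowL Fq (AdjoinRoot (fi i)) ∘ₗ LinearMap.proj i) := by
      apply LinearMap.ext
      intro t
      obtain ⟨w, rfl⟩ := e.surjective t
      rw [LinearEquiv.conj_apply]
      simp only [coe_comp, LinearEquiv.coe_coe, Function.comp_apply,
        LinearEquiv.symm_apply_apply]
      have h1 : e (F.restrict hinvW w) = Φ (F (w : AdjoinRoot f)) := rfl
      have h2 : (e w : ∀ i, AdjoinRoot (fi i)) = Φ (w : AdjoinRoot f) := rfl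
      rw [h1, hF, map_pow]
      funext i
      simp only [LinearMap.pi_apply, coe_comp, Function.comp_apply, proj_apply, h2,
        qpowL_apply, Pi.pow_apply]
      rfl
    have h3 : (F.restrict hinvW).charpoly
        = (e.conj (F.restrict hinvW)).charpoly := (e.charpoly_conj _).symm
    rw [h3, hconj, charpoly_pi k (fun i => AdjoinRoot (fi i)) _ _ hfinKi
      (fun i => qpowL Fq (AdjoinRoot (fi i)))]
    refine Finset.prod_congr rfl fun i _ => ?_
    rw [charpoly_qpow_field _ (qpowL Fq (AdjoinRoot (fi i))) (fun x => rfl)]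
    congr 1
    rw [(AdjoinRoot.powerBasis' (hmonic i)).finrank, AdjoinRoot.powerBasis'_dim, hdi]
  rw [hrest]
  -- final reversal computation
  have hdipos : ∀ i, 0 < di i := by
    intro i
    rw [← hdi]
    exact (hirr i).natDegree_pos
  rw [Polynomial.reverse_mul_of_domain, reverse_prod, reverse_X_pow']
  rw [mul_one]
  refine Finset.prod_congr rfl fun i _ => ?_
  exact reverse_X_pow_sub_one (hdipos i)
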